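/- For a > 0 and h > 0 let ψ_{a,h}(t) := (sin((a+h)t)/t) · (sin(ht)/(ht)) for t ≠ 0. Let a : ℝ → (0,∞) and h : ℝ → (0,∞) be measurable functions and let κ > 0 be such that a(t) + h(t) ≤ κ and h(t) ≥ κ^{−1} for all t ∈ ℝ. Then ∫_ℝ |ψ_{a(t),h(t)}(t)| dt ≤ 4 + 4·log κ. -/

import Mathlib

open MeasureTheory
open scoped ENNReal

/-- `sinc x = sin x / x`, extended continuously by `1` at `x = 0`. -/
noncomputable def sinc (x : ℝ) : ℝ := if x = 0 then 1 else Real.sin x / x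

/-- `ψ_{a,h}(t) = (sin((a+h)t)/t)·(sin(ht)/(ht))`, with the continuous extension at `t=0`. -/
noncomputable def psiAH (a h t : ℝ) : ℝ := (a + h) * sinc ((a + h) * t) * sinc (h * t)

lemma abs_sinc_le_one (x : ℝ) : |sinc x| ≤ 1 := by
  unfold sinc; split_ifs with hx
  · simp
  · rw [abs_div, div_le_one (abs_pos.2 hx)]; exact Real.abs_sin_le_abs

lemma abs_sinc_le_inv_abs (x : ℝ) (hx : x ≠ 0) : |sinc x| ≤ |x|⁻¹ := by
  unfold sinc; rw [if_neg hx, abs_div, div_eq_mul_inv]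
  calc |Real.sin x| * |x|⁻¹ ≤ 1 * |x|⁻¹ :=
        mul_le_mul_of_nonneg_right (Real.abs_sin_le_one x) (inv_nonneg.2 (abs_nonneg x))
    _ = |x|⁻¹ := one_mul _

lemma abs_psiAH (a h t : ℝ) (hah : 0 ≤ a + h) :
    |psiAH a h t| = (a + h) * |sinc ((a + h) * t)| * |sinc (h * t)| := by
  rw [psiAH, abs_mul, abs_mul, abs_of_nonneg hah]

lemma psi_bound1 (a h t : ℝ) (hah : 0 ≤ a + h) : |psiAH a h t| ≤ a + h := by
  rw [abs_psiAH a h t hah]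
  calc (a + h) * |sinc ((a + h) * t)| * |sinc (h * t)|
      ≤ (a + h) * 1 * 1 := by
        apply mul_le_mul _ (abs_sinc_le_one _) (abs_nonneg _)
        · exact mul_nonneg hah zero_le_one
        · exact mul_le_mul_of_nonneg_left (abs_sinc_le_one _) hah
    _ = a + h := by ring

lemma psi_bound2 (a h t : ℝ) (hah : 0 < a + h) (ht : t ≠ 0) : |psiAH a h t| ≤ |t|⁻¹ := by
  rw [abs_psiAH a h t hah.le]
  have h1 : (a + h) * |sinc ((a + h) * t)| ≤ |t|⁻¹ := by
    calc (a + h) * |sinc ((a + h) * t)| ≤ (a + h) * |(a + h) * t|⁻¹ :=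
          mul_le_mul_of_nonneg_left (abs_sinc_le_inv_abs _ (by positivity)) hah.le
      _ = |t|⁻¹ := by
          rw [abs_mul, abs_of_pos hah, mul_inv]
          field_simp
  calc (a + h) * |sinc ((a + h) * t)| * |sinc (h * t)| ≤ |t|⁻¹ * 1 := by
        apply mul_le_mul h1 (abs_sinc_le_one _) (abs_nonneg _) (by positivity)
    _ = |t|⁻¹ := mul_one _

lemma psi_bound3 (a h t κ : ℝ) (ha : 0 < a) (hh : 0 < h) (ht : t ≠ 0) (hκ : 0 < κ)
    (hlb : κ⁻¹ ≤ h) : |psiAH a h t| ≤ κ / t ^ 2 := by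
  have hah : 0 < a + h := by linarith
  rw [abs_psiAH a h t hah.le]
  have h1 : (a + h) * |sinc ((a + h) * t)| ≤ |t|⁻¹ := by
    calc (a + h) * |sinc ((a + h) * t)| ≤ (a + h) * |(a + h) * t|⁻¹ :=
          mul_le_mul_of_nonneg_left (abs_sinc_le_inv_abs _ (by positivity)) hah.le
      _ = |t|⁻¹ := by
          rw [abs_mul, abs_of_pos hah, mul_inv]; field_simp
  have h2 : |sinc (h * t)| ≤ h⁻¹ * |t|⁻¹ := by
    calc |sinc (h * t)| ≤ |h * t|⁻¹ := abs_sinc_le_inv_abs _ (by positivity)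
      _ = h⁻¹ * |t|⁻¹ := by rw [abs_mul, abs_of_pos hh, mul_inv]
  calc (a + h) * |sinc ((a + h) * t)| * |sinc (h * t)| ≤ |t|⁻¹ * (h⁻¹ * |t|⁻¹) :=
        mul_le_mul h1 h2 (abs_nonneg _) (by positivity)
    _ = h⁻¹ * (t ^ 2)⁻¹ := by rw [← sq_abs t, sq]; ring
    _ ≤ κ * (t ^ 2)⁻¹ := by
        have : h⁻¹ ≤ κ := by
          rw [inv_le_comm₀ hh hκ] at *; exact hlb
        exact mul_le_mul_of_nonneg_right this (by positivity)
    _ = κ / t ^ 2 := by rw [div_eq_mul_inv]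

lemma lint_neg_set (f : ℝ → ℝ≥0∞) (heven : ∀ t, f (-t) = f t)
    (s : Set ℝ) (hs : MeasurableSet s) :
    ∫⁻ t in (fun t : ℝ => -t) ⁻¹' s, f t = ∫⁻ t in s, f t := by
  have h1 := (Measure.measurePreserving_neg (volume : Measure ℝ)).setLIntegral_comp_preimage_emb
    (Homeomorph.neg ℝ).measurableEmbedding f s
  rw [← h1]
  exact setLIntegral_congr_fun (hs.preimage measurable_neg)
    (fun t _ => (heven t).symm)

lemma lint_mid (κ : ℝ) (hκ1 : 1 ≤ κ) :
    ∫⁻ t in Set.Ioc κ⁻¹ κ, ENNReal.ofReal |t|⁻¹ = ENNReal.ofReal (2 * Real.log κ) := by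
  have hκ : (0:ℝ) < κ := lt_of_lt_of_le one_pos hκ1
  have hinv : (0:ℝ) < κ⁻¹ := by positivity
  have hle : κ⁻¹ ≤ κ := le_trans (inv_le_one_of_one_le₀ hκ1) hκ1
  have hcong : ∫⁻ t in Set.Ioc κ⁻¹ κ, ENNReal.ofReal |t|⁻¹
      = ∫⁻ t in Set.Ioc κ⁻¹ κ, ENNReal.ofReal t⁻¹ := by
    refine setLIntegral_congr_fun measurableSet_Ioc (fun t ht => ?_)
    rw [abs_of_pos (lt_trans hinv ht.1)]
  rw [hcong]
  have hnot : (0:ℝ) ∉ Set.uIcc κ⁻¹ κ := Set.notMem_uIcc_of_lt hinv hκ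
  have hint : IntervalIntegrable (fun x : ℝ => x⁻¹) volume κ⁻¹ κ := by
    apply intervalIntegral.intervalIntegrable_inv (fun x hx => ?_) continuousOn_id
    intro h0; simp only [id] at h0; rw [h0] at hx; exact hnot hx
  have hint' : IntegrableOn (fun x : ℝ => x⁻¹) (Set.Ioc κ⁻¹ κ) volume := hint.1
  rw [← ofReal_integral_eq_lintegral_ofReal hint' ?_]
  · congr 1
    rw [← intervalIntegral.integral_of_le hle, integral_inv hnot]
    rw [Real.log_div (ne_of_gt hκ) (ne_of_gt hinv), Real.log_inv]
    ring
  · refine (ae_restrict_iff' measurableSet_Ioc).2 (Filter.Eventually.of_forall fun t ht => ?_)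
    exact le_of_lt (inv_pos.2 (lt_trans hinv ht.1))

lemma lint_tail (κ : ℝ) (hκ : 0 < κ) :
    ∫⁻ t in Set.Ioi κ, ENNReal.ofReal (κ / t ^ 2) = ENNReal.ofReal 1 := by
  have hcong : ∫⁻ t in Set.Ioi κ, ENNReal.ofReal (κ / t ^ 2)
      = ∫⁻ t in Set.Ioi κ, ENNReal.ofReal (κ * t ^ (-2 : ℝ)) := by
    refine setLIntegral_congr_fun measurableSet_Ioi (fun t ht => ?_)
    have ht0 : (0:ℝ) < t := lt_trans hκ ht
    rw [Real.rpow_neg ht0.le, div_eq_mul_inv]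
    norm_num [Real.rpow_natCast]
  rw [hcong]
  have hint : IntegrableOn (fun t : ℝ => κ * t ^ (-2 : ℝ)) (Set.Ioi κ) volume :=
    (integrableOn_Ioi_rpow_of_lt (by norm_num) hκ).const_mul κ
  rw [← ofReal_integral_eq_lintegral_ofReal hint ?_]
  · congr 1
    rw [integral_const_mul, integral_Ioi_rpow_of_lt (by norm_num) hκ]
    norm_num
    rw [Real.rpow_neg_one]
    field_simp
  · refine (ae_restrict_iff' measurableSet_Ioi).2 (Filter.Eventually.of_forall fun t ht => ?_)
    have ht0 : (0:ℝ) < t := lt_trans hκ ht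
    positivity

/-- If `a, h : ℝ → (0,∞)` are measurable with `a(t)+h(t) ≤ κ` and `h(t) ≥ κ⁻¹` for all `t`,
then `∫ |ψ_{a(t),h(t)}(t)| dt ≤ 4 + 4 log κ`. -/
theorem psiAH_integral_bound (a h : ℝ → ℝ) (ha : Measurable a) (hh : Measurable h)
    (κ : ℝ) (hκ : 0 < κ) (hapos : ∀ t, 0 < a t) (hhpos : ∀ t, 0 < h t)
    (hub : ∀ t, a t + h t ≤ κ) (hlb : ∀ t, κ⁻¹ ≤ h t) :
    ∫⁻ t : ℝ, ENNReal.ofReal |psiAH (a t) (h t) t| ≤ ENNReal.ofReal (4 + 4 * Real.log κ) := by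
  have hκ1 : 1 ≤ κ := by
    have h1 : κ⁻¹ ≤ κ := le_trans (hlb 0) (le_trans (by linarith [hapos 0]) (hub 0))
    nlinarith [mul_inv_cancel₀ (ne_of_gt hκ)]
  have hinv : (0:ℝ) < κ⁻¹ := by positivity
  have hlog : 0 ≤ Real.log κ := Real.log_nonneg hκ1
  -- the five pieces of the dominating function
  set F2 : ℝ → ℝ≥0∞ := fun t => ENNReal.ofReal |t|⁻¹ with hF2
  set F3 : ℝ → ℝ≥0∞ := fun t => ENNReal.ofReal (κ / t ^ 2) with hF3
  set S1 : Set ℝ := Set.Icc (-κ⁻¹) κ⁻¹ with hS1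
  set S2p : Set ℝ := Set.Ioc κ⁻¹ κ with hS2p
  set S2n : Set ℝ := (fun t : ℝ => -t) ⁻¹' S2p with hS2n
  set S3p : Set ℝ := Set.Ioi κ with hS3p
  set S3n : Set ℝ := (fun t : ℝ => -t) ⁻¹' S3p with hS3n
  have mS1 : MeasurableSet S1 := measurableSet_Icc
  have mS2p : MeasurableSet S2p := measurableSet_Ioc
  have mS2n : MeasurableSet S2n := mS2p.preimage measurable_neg
  have mS3p : MeasurableSet S3p := measurableSet_Ioi
  have mS3n : MeasurableSet S3n := mS3p.preimage measurable_neg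
  have mF2 : Measurable F2 := (measurable_id.abs.inv).ennreal_ofReal
  have mF3 : Measurable F3 := (measurable_const.div ((measurable_id.pow_const 2))).ennreal_ofReal
  set G : ℝ → ℝ≥0∞ := fun t =>
    S1.indicator (fun _ => ENNReal.ofReal κ) t + S2p.indicator F2 t + S2n.indicator F2 t
      + S3p.indicator F3 t + S3n.indicator F3 t with hG
  -- pointwise domination
  have hptw : ∀ t, ENNReal.ofReal |psiAH (a t) (h t) t| ≤ G t := by
    intro t
    have hah : 0 < a t + h t := by linarith [hapos t, hhpos t]
    rcases le_or_gt |t| κ⁻¹ with h1 | h1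
    · have ht1 : t ∈ S1 := abs_le.1 h1
      have : ENNReal.ofReal |psiAH (a t) (h t) t| ≤ S1.indicator (fun _ => ENNReal.ofReal κ) t := by
        rw [Set.indicator_of_mem ht1]
        exact ENNReal.ofReal_le_ofReal (le_trans (psi_bound1 _ _ _ hah.le) (hub t))
      exact this.trans (le_self_add.trans le_self_add |>.trans le_self_add |>.trans le_self_add)
    · have ht0 : t ≠ 0 := fun h0 => by simp [h0] at h1; linarith
      rcases le_or_gt |t| κ with h2 | h2
      · -- middle region
        have hb : ENNReal.ofReal |psiAH (a t) (h t) t| ≤ F2 t :=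
          ENNReal.ofReal_le_ofReal (psi_bound2 _ _ _ hah ht0)
        rcases lt_or_ge 0 t with htpos | htneg
        · have ht2 : t ∈ S2p := ⟨by rwa [abs_of_pos htpos] at h1, by rwa [abs_of_pos htpos] at h2⟩
          have : ENNReal.ofReal |psiAH (a t) (h t) t| ≤ S2p.indicator F2 t := by
            rw [Set.indicator_of_mem ht2]; exact hb
          exact this.trans ((le_add_self.trans le_self_add |>.trans le_self_add).trans le_self_add)
        · have htneg' : t < 0 := lt_of_le_of_ne htneg ht0
          have ht2 : t ∈ S2n := by
            refine ⟨?_, ?_⟩ <;> rw [abs_of_neg htneg'] at h1 h2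
            · exact h1
            · exact h2
          have : ENNReal.ofReal |psiAH (a t) (h t) t| ≤ S2n.indicator F2 t := by
            rw [Set.indicator_of_mem ht2]; exact hb
          exact this.trans ((le_add_self.trans le_self_add).trans le_self_add)
      · -- tail region
        have hb : ENNReal.ofReal |psiAH (a t) (h t) t| ≤ F3 t :=
          ENNReal.ofReal_le_ofReal
            (psi_bound3 _ _ _ _ (hapos t) (hhpos t) ht0 hκ (hlb t))
        rcases lt_or_ge 0 t with htpos | htneg
        · have ht3 : t ∈ S3p := by rwa [hS3p, Set.mem_Ioi, ← abs_of_pos htpos]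
          have : ENNReal.ofReal |psiAH (a t) (h t) t| ≤ S3p.indicator F3 t := by
            rw [Set.indicator_of_mem ht3]; exact hb
          exact this.trans (le_add_self.trans le_self_add)
        · have htneg' : t < 0 := lt_of_le_of_ne htneg ht0
          have ht3 : t ∈ S3n := by
            rw [hS3n, Set.mem_preimage, hS3p, Set.mem_Ioi]
            rwa [abs_of_neg htneg'] at h2
          have : ENNReal.ofReal |psiAH (a t) (h t) t| ≤ S3n.indicator F3 t := by
            rw [Set.indicator_of_mem ht3]; exact hb
          exact this.trans le_add_self
  -- integrate the dominating function
  calc ∫⁻ t : ℝ, ENNReal.ofReal |psiAH (a t) (h t) t| ≤ ∫⁻ t, G t := lintegral_mono hptw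
    _ = (∫⁻ t, S1.indicator (fun _ => ENNReal.ofReal κ) t) + (∫⁻ t, S2p.indicator F2 t)
        + (∫⁻ t, S2n.indicator F2 t) + (∫⁻ t, S3p.indicator F3 t) + (∫⁻ t, S3n.indicator F3 t) := by
        rw [hG]
        rw [lintegral_add_right _ (mF3.indicator mS3n),
            lintegral_add_right _ (mF3.indicator mS3p),
            lintegral_add_right _ (mF2.indicator mS2n),
            lintegral_add_right _ (mF2.indicator mS2p)]
    _ = ENNReal.ofReal 2 + ENNReal.ofReal (2 * Real.log κ) + ENNReal.ofReal (2 * Real.log κ)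
        + ENNReal.ofReal 1 + ENNReal.ofReal 1 := by
        congr 1; congr 1; congr 1; congr 1
        · rw [lintegral_indicator mS1, setLIntegral_const, hS1, Real.volume_Icc,
            ← ENNReal.ofReal_mul hκ.le]
          congr 1
          field_simp
          ring
        · rw [lintegral_indicator mS2p]; exact lint_mid κ hκ1
        · rw [lintegral_indicator mS2n, hS2n,
            lint_neg_set F2 (fun t => by simp [hF2]) S2p mS2p]
          exact lint_mid κ hκ1
        · rw [lintegral_indicator mS3p]; exact lint_tail κ hκ
        · rw [lintegral_indicator mS3n, hS3n,
            lint_neg_set F3 (fun t => by simp [hF3]) S3p mS3p]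
          exact lint_tail κ hκ
    _ = ENNReal.ofReal (2 + 2 * Real.log κ + 2 * Real.log κ + 1 + 1) := by
        rw [ENNReal.ofReal_add (by linarith) (by norm_num),
            ENNReal.ofReal_add (by linarith) (by norm_num),
            ENNReal.ofReal_add (by linarith) (by linarith),
            ENNReal.ofReal_add (by norm_num) (by linarith)]
    _ ≤ ENNReal.ofReal (4 + 4 * Real.log κ) := ENNReal.ofReal_le_ofReal (by linarith)
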